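/- (Forward KL smoothness) Assume |A| ≥ 3. For any probability distribution ρ on S and any θ, θ' ∈ ℝ^{S×A}, the forward-KL-regularized value function satisfies | Ṽ_λ^{π_{θ'}}(ρ) − Ṽ_λ^{π_θ}(ρ) − ⟨∇_θ Ṽ_λ^{π_θ}(ρ), θ' − θ⟩ | ≤ (L_F(θ,θ')/2) ‖θ' − θ‖₂² with L_F(θ,θ') := 8 ( r_max + λ max{ max_{s,a}|log π_θ(a|s)|, max_{s,a}|log π_{θ'}(a|s)| } ) / (1−γ)³. -/

import Mathlib

open Finset
open scoped RealInnerProductSpace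

/-- The softmax policy `π_θ(a|s) = exp(θ_{sa})/∑_{a'} exp(θ_{sa'})`. -/
noncomputable def softmaxPolicy {S A : Type*} [Fintype A]
    (θ : S × A → ℝ) (s : S) (a : A) : ℝ :=
  Real.exp (θ (s, a)) / ∑ a' : A, Real.exp (θ (s, a'))

/-- The `f`-divergence `D_f(p,q) := ∑_a q(a) f(p(a)/q(a))` of two probability vectors. -/
noncomputable def fDiv {A : Type*} [Fintype A] (f : ℝ → ℝ) (p q : A → ℝ) : ℝ :=
  ∑ a : A, q a * f (p a / q a)

/-- `π` is a policy: each `π(·|s)` is a strictly positive probability distribution on `A`. -/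
def IsPolicy {S A : Type*} [Fintype A] (π : S → A → ℝ) : Prop :=
  (∀ s a, 0 < π s a) ∧ ∀ s, ∑ a : A, π s a = 1

/-- `V` satisfies the Bellman equation of the `f`-divergence regularized value function
`Ṽ_λ^π`. -/
def IsRegValue {S A : Type*} [Fintype S] [Fintype A]
    (P : S → A → S → ℝ) (r : S → A → ℝ) (γ lam : ℝ) (f : ℝ → ℝ)
    (πref π : S → A → ℝ) (V : S → ℝ) : Prop :=
  ∀ s, V s = (∑ a : A, π s a * (r s a + γ * ∑ s' : S, P s a s' * V s')) -
      lam * fDiv f (π s) (πref s)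

set_option linter.unusedSectionVars false
set_option linter.unusedVariables false

namespace FKL

variable {S A : Type*} [Fintype S] [Fintype A] [Nonempty S] [Nonempty A]

lemma softmax_pos (θ : S × A → ℝ) (s : S) (a : A) : 0 < softmaxPolicy θ s a :=
  div_pos (Real.exp_pos _) (Finset.sum_pos (fun a' _ => Real.exp_pos _) univ_nonempty)

lemma softmax_sum_one (θ : S × A → ℝ) (s : S) : ∑ a : A, softmaxPolicy θ s a = 1 := by
  unfold softmaxPolicy
  rw [← Finset.sum_div]
  exact div_self (ne_of_gt (Finset.sum_pos (fun a' _ => Real.exp_pos _) univ_nonempty))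

lemma softmax_le_one (θ : S × A → ℝ) (s : S) (a : A) : softmaxPolicy θ s a ≤ 1 := by
  have h := softmax_sum_one θ s
  have : softmaxPolicy θ s a ≤ ∑ a' : A, softmaxPolicy θ s a' :=
    Finset.single_le_sum (fun a' _ => (softmax_pos θ s a').le) (Finset.mem_univ a)
  linarith

/-- Max principle : if `x = γ P_π x + e` with `|e| ≤ E`, then `|x| ≤ E/(1-γ)`. -/
lemma max_principle (γ : ℝ) (hγ0 : 0 ≤ γ) (hγ1 : γ < 1)
    (P : S → A → S → ℝ) (hP : ∀ s a, (∀ s', 0 ≤ P s a s') ∧ ∑ s' : S, P s a s' = 1)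
    (w : S → A → ℝ) (hw0 : ∀ s a, 0 ≤ w s a) (hw1 : ∀ s, ∑ a : A, w s a = 1)
    (x e : S → ℝ)
    (heq : ∀ s, x s = γ * (∑ a : A, w s a * ∑ s' : S, P s a s' * x s') + e s)
    (E : ℝ) (hE : ∀ s, |e s| ≤ E) : ∀ s, |x s| ≤ E / (1 - γ) := by
  obtain ⟨s0, hs0⟩ := Finite.exists_max (fun s => |x s|)
  have h1γ : (0:ℝ) < 1 - γ := by linarith
  have key : ∀ s, |∑ a : A, w s a * ∑ s' : S, P s a s' * x s'| ≤ |x s0| := by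
    intro s
    calc |∑ a : A, w s a * ∑ s' : S, P s a s' * x s'|
        ≤ ∑ a : A, |w s a * ∑ s' : S, P s a s' * x s'| := Finset.abs_sum_le_sum_abs _ _
      _ ≤ ∑ a : A, w s a * |x s0| := by
          apply Finset.sum_le_sum
          intro a _
          rw [abs_mul, abs_of_nonneg (hw0 s a)]
          apply mul_le_mul_of_nonneg_left _ (hw0 s a)
          calc |∑ s' : S, P s a s' * x s'| ≤ ∑ s' : S, |P s a s' * x s'| :=
                Finset.abs_sum_le_sum_abs _ _
            _ ≤ ∑ s' : S, P s a s' * |x s0| := by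
                apply Finset.sum_le_sum
                intro s' _
                rw [abs_mul, abs_of_nonneg ((hP s a).1 s')]
                exact mul_le_mul_of_nonneg_left (hs0 s') ((hP s a).1 s')
            _ = |x s0| := by rw [← Finset.sum_mul, (hP s a).2, one_mul]
      _ = |x s0| := by rw [← Finset.sum_mul, hw1 s, one_mul]
  have hM : |x s0| ≤ γ * |x s0| + E := by
    calc |x s0| = |γ * (∑ a : A, w s0 a * ∑ s' : S, P s0 a s' * x s') + e s0| := by
          rw [← heq s0]
      _ ≤ γ * |∑ a : A, w s0 a * ∑ s' : S, P s0 a s' * x s'| + |e s0| := by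
          refine (abs_add_le _ _).trans ?_
          rw [abs_mul, abs_of_nonneg hγ0]
      _ ≤ γ * |x s0| + E := by
          have := key s0
          have := hE s0
          nlinarith
  intro s
  have hxs0 : |x s0| ≤ E / (1 - γ) := by
    rw [le_div_iff₀ h1γ]; nlinarith
  exact (hs0 s).trans hxs0

end FKL

namespace FKL

variable {S A : Type*} [Fintype S] [Fintype A] [Nonempty S] [Nonempty A]

lemma sum_swap_PV (π : A → ℝ) (P : S → A → S → ℝ) (x : S → ℝ) (s : S) :
    ∑ s' : S, (∑ a : A, π a * P s a s') * x s' =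
      ∑ a : A, π a * ∑ s' : S, P s a s' * x s' := by
  simp_rw [Finset.sum_mul, Finset.mul_sum, mul_assoc]
  exact Finset.sum_comm

variable [DecidableEq S]

noncomputable def mM (P : S → A → S → ℝ) (η : S × A → ℝ) : Matrix S S ℝ :=
  Matrix.of fun s s' => ∑ a : A, softmaxPolicy η s a * P s a s'

noncomputable def fC (r : S → A → ℝ) (lam : ℝ) (πref : S → A → ℝ) (η : S × A → ℝ) :
    S → ℝ :=
  fun s => (∑ a : A, softmaxPolicy η s a * r s a) -
    lam * fDiv (fun x => -Real.log x) (softmaxPolicy η s) (πref s)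

noncomputable def dD (P : S → A → S → ℝ) (γ : ℝ) (η : S × A → ℝ) : Matrix S S ℝ :=
  1 - γ • mM P η

noncomputable def regV (P : S → A → S → ℝ) (r : S → A → ℝ) (γ lam : ℝ)
    (πref : S → A → ℝ) (η : S × A → ℝ) : S → ℝ :=
  (dD P γ η)⁻¹.mulVec (fC r lam πref η)

lemma dD_mulVec (P : S → A → S → ℝ) (γ : ℝ) (η : S × A → ℝ) (x : S → ℝ) (s : S) :
    (dD P γ η).mulVec x s =
      x s - γ * ∑ a : A, softmaxPolicy η s a * ∑ s' : S, P s a s' * x s' := by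
  simp only [dD, Matrix.mulVec, dotProduct, Matrix.sub_apply, Matrix.smul_apply,
    Matrix.one_apply, mM, Matrix.of_apply, sub_mul, smul_eq_mul]
  have : ∀ s' : S, (if s = s' then (1:ℝ) else 0) * x s' -
      γ * (∑ a : A, softmaxPolicy η s a * P s a s') * x s' =
      (if s = s' then x s' else 0) - γ * ((∑ a : A, softmaxPolicy η s a * P s a s') * x s') := by
    intro s'; split_ifs <;> ring
  rw [Finset.sum_congr rfl fun s' _ => this s', Finset.sum_sub_distrib]
  congr 1
  · simp
  · rw [← Finset.mul_sum, sum_swap_PV (fun a => softmaxPolicy η s a) P x s]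

lemma isUnit_det_dD (γ : ℝ) (hγ0 : 0 ≤ γ) (hγ1 : γ < 1)
    (P : S → A → S → ℝ) (hP : ∀ s a, (∀ s', 0 ≤ P s a s') ∧ ∑ s' : S, P s a s' = 1)
    (η : S × A → ℝ) : IsUnit (dD P γ η).det := by
  by_contra h
  have hdet : (dD P γ η).det = 0 := by
    simpa [isUnit_iff_ne_zero] using h
  obtain ⟨v, hv0, hv⟩ := (Matrix.exists_mulVec_eq_zero_iff).2 hdet
  have heq : ∀ s, v s = γ * (∑ a : A, softmaxPolicy η s a * ∑ s' : S, P s a s' * v s') + 0 := by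
    intro s
    have := congrFun hv s
    rw [dD_mulVec] at this
    simp only [Pi.zero_apply] at this
    linarith
  have := max_principle γ hγ0 hγ1 P hP (fun s a => softmaxPolicy η s a)
    (fun s a => (softmax_pos η s a).le) (fun s => softmax_sum_one η s) v 0 heq 0
    (fun s => by simp) 
  apply hv0
  ext s
  have h1γ : (0:ℝ) < 1 - γ := by linarith
  have := this s
  rw [zero_div] at this
  simpa using abs_nonpos_iff.mp (by linarith [abs_nonneg (v s)])

lemma isRegValue_regV (γ : ℝ) (hγ0 : 0 ≤ γ) (hγ1 : γ < 1)
    (P : S → A → S → ℝ) (hP : ∀ s a, (∀ s', 0 ≤ P s a s') ∧ ∑ s' : S, P s a s' = 1)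
    (r : S → A → ℝ) (lam : ℝ) (πref : S → A → ℝ) (η : S × A → ℝ) :
    IsRegValue P r γ lam (fun x => -Real.log x) πref (softmaxPolicy η)
      (regV P r γ lam πref η) := by
  intro s
  have h1 : (dD P γ η).mulVec (regV P r γ lam πref η) = fC r lam πref η := by
    rw [regV, Matrix.mulVec_mulVec, Matrix.mul_nonsing_inv _ (isUnit_det_dD γ hγ0 hγ1 P hP η),
      Matrix.one_mulVec]
  have h2 := congrFun h1 s
  rw [dD_mulVec] at h2
  have h3 : regV P r γ lam πref η s =
      γ * ∑ a : A, softmaxPolicy η s a * ∑ s' : S, P s a s' * regV P r γ lam πref η s' +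
      fC r lam πref η s := by linarith
  rw [h3, fC]
  simp_rw [mul_add, Finset.sum_add_distrib, Finset.mul_sum]
  have h4 : ∀ a : A, ∀ i : S, γ * (softmaxPolicy η s a * (P s a i * regV P r γ lam πref η i)) =
      softmaxPolicy η s a * (γ * (P s a i * regV P r γ lam πref η i)) := by
    intro a i; ring
  rw [Finset.sum_congr rfl fun a _ => Finset.sum_congr rfl fun i _ => h4 a i]
  ring

lemma isRegValue_unique (γ : ℝ) (hγ0 : 0 ≤ γ) (hγ1 : γ < 1)
    (P : S → A → S → ℝ) (hP : ∀ s a, (∀ s', 0 ≤ P s a s') ∧ ∑ s' : S, P s a s' = 1)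
    (r : S → A → ℝ) (lam : ℝ) (f : ℝ → ℝ) (πref π : S → A → ℝ)
    (hπ0 : ∀ s a, 0 ≤ π s a) (hπ1 : ∀ s, ∑ a : A, π s a = 1)
    (V1 V2 : S → ℝ) (h1 : IsRegValue P r γ lam f πref π V1)
    (h2 : IsRegValue P r γ lam f πref π V2) : V1 = V2 := by
  have heq : ∀ s, V1 s - V2 s =
      γ * (∑ a : A, π s a * ∑ s' : S, P s a s' * (V1 s' - V2 s')) + 0 := by
    intro s
    have e1 := h1 s
    have e2 := h2 s
    have : V1 s - V2 s = ∑ a : A, π s a *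
        (γ * ∑ s' : S, P s a s' * V1 s' - γ * ∑ s' : S, P s a s' * V2 s') := by
      rw [e1, e2]
      have h5 : ∀ a : A, π s a * (γ * ∑ s' : S, P s a s' * V1 s' - γ * ∑ s' : S, P s a s' * V2 s') =
          π s a * (r s a + γ * ∑ s' : S, P s a s' * V1 s') -
          π s a * (r s a + γ * ∑ s' : S, P s a s' * V2 s') := by
        intro a; ring
      rw [Finset.sum_congr rfl fun a _ => h5 a, Finset.sum_sub_distrib]
      ring
    rw [this, add_zero, Finset.mul_sum]
    apply Finset.sum_congr rfl
    intro a _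
    have h6 : ∀ s' : S, P s a s' * (V1 s' - V2 s') =
        P s a s' * V1 s' - P s a s' * V2 s' := by intro s'; ring
    rw [Finset.sum_congr rfl fun s' _ => h6 s', Finset.sum_sub_distrib]
    ring
  have := max_principle γ hγ0 hγ1 P hP π hπ0 hπ1 (fun s => V1 s - V2 s) 0 heq 0
    (fun s => by simp)
  ext s
  have := this s
  rw [zero_div] at this
  have h := abs_nonneg (V1 s - V2 s)
  have : |V1 s - V2 s| = 0 := le_antisymm this h
  linarith [abs_eq_zero.mp this, sub_eq_zero.mp (abs_eq_zero.mp this)]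

end FKL

namespace FKL

variable {S A : Type*} [Fintype S] [Fintype A] [Nonempty S] [Nonempty A]

local notation "E" => EuclideanSpace ℝ (S × A)

lemma contDiff_eval (q : S × A) : ContDiff ℝ ((⊤ : ℕ∞) : WithTop ℕ∞) (fun η : E => η q) :=
  (EuclideanSpace.proj (𝕜 := ℝ) q).contDiff

lemma contDiff_sumexp (s : S) : ContDiff ℝ ((⊤ : ℕ∞) : WithTop ℕ∞) (fun η : E => ∑ a' : A, Real.exp (η (s, a'))) :=
  ContDiff.sum fun a' _ => Real.contDiff_exp.comp (contDiff_eval (s, a'))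

lemma sumexp_pos (η : S × A → ℝ) (s : S) : 0 < ∑ a' : A, Real.exp (η (s, a')) :=
  Finset.sum_pos (fun a' _ => Real.exp_pos _) univ_nonempty

lemma contDiff_softmax (s : S) (a : A) :
    ContDiff ℝ ((⊤ : ℕ∞) : WithTop ℕ∞) (fun η : E => softmaxPolicy η s a) := by
  apply ContDiff.div
  · exact Real.contDiff_exp.comp (contDiff_eval (s, a))
  · exact contDiff_sumexp s
  · exact fun η => (sumexp_pos η s).ne'

lemma contDiff_log_softmax (s : S) (a : A) :
    ContDiff ℝ ((⊤ : ℕ∞) : WithTop ℕ∞) (fun η : E => Real.log (softmaxPolicy η s a)) :=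
  ContDiff.log (contDiff_softmax s a) fun η => (softmax_pos η s a).ne'

lemma fDiv_log_eq {p q : A → ℝ} (hp : ∀ a, 0 < p a) (hq : ∀ a, 0 < q a) :
    fDiv (fun x => -Real.log x) p q = ∑ a : A, q a * (Real.log (q a) - Real.log (p a)) := by
  unfold fDiv
  apply Finset.sum_congr rfl
  intro a _
  simp only []
  rw [Real.log_div (hp a).ne' (hq a).ne']
  ring

variable [DecidableEq S]

lemma contDiff_fC (r : S → A → ℝ) (lam : ℝ) (πref : S → A → ℝ) (hπref : IsPolicy πref)
    (s : S) : ContDiff ℝ ((⊤ : ℕ∞) : WithTop ℕ∞) (fun η : E => fC r lam πref η s) := by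
  have heq : (fun η : E => fC r lam πref η s) =
      fun η : E => (∑ a : A, softmaxPolicy η s a * r s a) -
        lam * ∑ a : A, πref s a * (Real.log (πref s a) - Real.log (softmaxPolicy η s a)) := by
    funext η
    rw [fC, fDiv_log_eq (fun a => softmax_pos η s a) (fun a => hπref.1 s a)]
  rw [heq]
  apply ContDiff.sub
  · exact ContDiff.sum fun a _ => (contDiff_softmax s a).mul contDiff_const
  · exact contDiff_const.mul <| ContDiff.sum fun a _ =>
      contDiff_const.mul (contDiff_const.sub (contDiff_log_softmax s a))

lemma contDiff_det_entries {I : Type*} [Fintype I] [DecidableEq I]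
    (G : E → Matrix I I ℝ) (hG : ∀ i j, ContDiff ℝ ((⊤ : ℕ∞) : WithTop ℕ∞) (fun η => G η i j)) :
    ContDiff ℝ ((⊤ : ℕ∞) : WithTop ℕ∞) (fun η : E => (G η).det) := by
  have heq : (fun η : E => (G η).det) =
      fun η => ∑ σ : Equiv.Perm I, (Equiv.Perm.sign σ : ℤ) * ∏ i : I, G η (σ i) i := by
    funext η
    rw [Matrix.det_apply']
  rw [heq]
  apply ContDiff.sum
  intro σ _
  apply ContDiff.mul contDiff_const
  rw [contDiff_iff_contDiffAt]
  intro η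
  exact contDiffAt_prod fun i _ => (hG (σ i) i).contDiffAt

lemma contDiff_dD_entry (P : S → A → S → ℝ) (γ : ℝ) (i j : S) :
    ContDiff ℝ ((⊤ : ℕ∞) : WithTop ℕ∞) (fun η : E => dD P γ η i j) := by
  have heq : (fun η : E => dD P γ η i j) =
      fun η : E => (1 : Matrix S S ℝ) i j - γ * ∑ a : A, softmaxPolicy η i a * P i a j := by
    funext η
    simp [dD, mM, Matrix.sub_apply, Matrix.smul_apply, smul_eq_mul]
  rw [heq]
  exact contDiff_const.sub (contDiff_const.mul
    (ContDiff.sum fun a _ => (contDiff_softmax i a).mul contDiff_const))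

lemma contDiff_regV (γ : ℝ) (hγ0 : 0 ≤ γ) (hγ1 : γ < 1)
    (P : S → A → S → ℝ) (hP : ∀ s a, (∀ s', 0 ≤ P s a s') ∧ ∑ s' : S, P s a s' = 1)
    (r : S → A → ℝ) (lam : ℝ) (πref : S → A → ℝ) (hπref : IsPolicy πref) (s : S) :
    ContDiff ℝ ((⊤ : ℕ∞) : WithTop ℕ∞) (fun η : E => regV P r γ lam πref η s) := by
  have heq : (fun η : E => regV P r γ lam πref η s) =
      fun η : E => ∑ s' : S, ((dD P γ η).det)⁻¹ *
        ((dD P γ η).updateRow s' (Pi.single s 1)).det * fC r lam πref η s' := by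
    funext η
    rw [regV, Matrix.mulVec, dotProduct]
    apply Finset.sum_congr rfl
    intro s' _
    rw [Matrix.inv_def, Ring.inverse_eq_inv', Matrix.smul_apply, smul_eq_mul,
      Matrix.adjugate_apply]
  rw [heq]
  apply ContDiff.sum
  intro s' _
  refine ContDiff.mul (ContDiff.mul ?_ ?_) (contDiff_fC r lam πref hπref s')
  · exact ContDiff.inv (contDiff_det_entries _ (contDiff_dD_entry P γ))
      fun η => ((isUnit_det_dD γ hγ0 hγ1 P hP η).ne_zero)
  · apply contDiff_det_entries
    intro i j
    have heq2 : (fun η : E => (dD P γ η).updateRow s' (Pi.single s 1) i j) =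
        fun η : E => if i = s' then (Pi.single s (1:ℝ) : S → ℝ) j else dD P γ η i j := by
      funext η
      rw [Matrix.updateRow_apply]
    rw [heq2]
    split_ifs
    · exact contDiff_const
    · exact contDiff_dD_entry P γ i j

end FKL

namespace FKL

section Line

variable {S A : Type*} [Fintype S] [Fintype A] [Nonempty S] [Nonempty A]

variable (θ d : EuclideanSpace ℝ (S × A))

/-- policy along the line -/
noncomputable def pl (t : ℝ) (s : S) (a : A) : ℝ := softmaxPolicy (θ + t • d) s a

/-- mean of `d(s,·)` under the policy -/
noncomputable def μl (t : ℝ) (s : S) : ℝ := ∑ a : A, pl θ d t s a * d (s, a)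

/-- variance of `d(s,·)` under the policy -/
noncomputable def νl (t : ℝ) (s : S) : ℝ := ∑ a : A, pl θ d t s a * (d (s, a) - μl θ d t s) ^ 2

lemma line_apply (t : ℝ) (q : S × A) : (θ + t • d) q = θ q + t * d q := rfl

lemma pl_eq (t : ℝ) (s : S) (a : A) :
    pl θ d t s a = Real.exp (θ (s, a) + t * d (s, a)) /
      ∑ b : A, Real.exp (θ (s, b) + t * d (s, b)) := by
  simp [pl, softmaxPolicy, line_apply]

lemma pl_pos (t : ℝ) (s : S) (a : A) : 0 < pl θ d t s a := softmax_pos _ s a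

lemma pl_sum_one (t : ℝ) (s : S) : ∑ a : A, pl θ d t s a = 1 := softmax_sum_one _ s

lemma pl_le_one (t : ℝ) (s : S) (a : A) : pl θ d t s a ≤ 1 := softmax_le_one _ s a

lemma hasDerivAt_pl (t : ℝ) (s : S) (a : A) :
    HasDerivAt (fun u => pl θ d u s a)
      (pl θ d t s a * (d (s, a) - μl θ d t s)) t := by
  have he : ∀ b : A, HasDerivAt (fun u : ℝ => Real.exp (θ (s, b) + u * d (s, b)))
      (Real.exp (θ (s, b) + t * d (s, b)) * d (s, b)) t := by
    intro b
    exact ((hasDerivAt_mul_const (d (s, b))).const_add (θ (s, b))).exp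
  have hZ : HasDerivAt (fun u : ℝ => ∑ b : A, Real.exp (θ (s, b) + u * d (s, b)))
      (∑ b : A, Real.exp (θ (s, b) + t * d (s, b)) * d (s, b)) t :=
    HasDerivAt.fun_sum fun b _ => he b
  have hZpos : (0:ℝ) < ∑ b : A, Real.exp (θ (s, b) + t * d (s, b)) :=
    Finset.sum_pos (fun b _ => Real.exp_pos _) univ_nonempty
  have hquot := (he a).div hZ hZpos.ne'
  have hfun : (fun u => pl θ d u s a) = fun u => Real.exp (θ (s, a) + u * d (s, a)) /
      ∑ b : A, Real.exp (θ (s, b) + u * d (s, b)) := by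
    funext u; exact pl_eq θ d u s a
  rw [hfun]
  refine hquot.congr_deriv ?_
  have hμ : μl θ d t s = (∑ b : A, Real.exp (θ (s, b) + t * d (s, b)) * d (s, b)) /
      (∑ b : A, Real.exp (θ (s, b) + t * d (s, b))) := by
    rw [μl, Finset.sum_div]
    apply Finset.sum_congr rfl
    intro b _
    rw [pl_eq]
    ring
  rw [pl_eq, hμ]
  field_simp

lemma hasDerivAt_μl (t : ℝ) (s : S) :
    HasDerivAt (fun u => μl θ d u s) (νl θ d t s) t := by
  have h : HasDerivAt (fun u => μl θ d u s)
      (∑ a : A, pl θ d t s a * (d (s, a) - μl θ d t s) * d (s, a)) t :=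
    HasDerivAt.fun_sum fun a _ => (hasDerivAt_pl θ d t s a).mul_const (d (s, a))
  have key : ∀ a : A, pl θ d t s a * (d (s, a) - μl θ d t s) * d (s, a) =
      pl θ d t s a * (d (s, a) - μl θ d t s) ^ 2 +
      (μl θ d t s * (pl θ d t s a * d (s, a)) - μl θ d t s ^ 2 * pl θ d t s a) := by
    intro a; ring
  have hsum : ∑ a : A, pl θ d t s a * (d (s, a) - μl θ d t s) * d (s, a) = νl θ d t s := by
    rw [Finset.sum_congr rfl fun a _ => key a, Finset.sum_add_distrib]
    have h2 : ∑ a : A, (μl θ d t s * (pl θ d t s a * d (s, a)) -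
        μl θ d t s ^ 2 * pl θ d t s a) = 0 := by
      rw [Finset.sum_sub_distrib, ← Finset.mul_sum, ← Finset.mul_sum, ← μl, pl_sum_one]
      ring
    rw [h2, add_zero]
    rfl
  rw [← hsum]
  exact h

lemma hasDerivAt_log_pl (t : ℝ) (s : S) (a : A) :
    HasDerivAt (fun u => Real.log (pl θ d u s a)) (d (s, a) - μl θ d t s) t := by
  have h := (hasDerivAt_pl θ d t s a).log (pl_pos θ d t s a).ne'
  convert h using 1
  field_simp [(pl_pos θ d t s a).ne']

lemma abs_μl_le {b : ℝ} (hb : ∀ q : S × A, |d q| ≤ b) (t : ℝ) (s : S) : |μl θ d t s| ≤ b := by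
  calc |μl θ d t s| ≤ ∑ a : A, |pl θ d t s a * d (s, a)| := Finset.abs_sum_le_sum_abs _ _
    _ ≤ ∑ a : A, pl θ d t s a * b := by
        apply Finset.sum_le_sum
        intro a _
        rw [abs_mul, abs_of_pos (pl_pos θ d t s a)]
        exact mul_le_mul_of_nonneg_left (hb (s, a)) (pl_pos θ d t s a).le
    _ = b := by rw [← Finset.sum_mul, pl_sum_one, one_mul]

lemma abs_d_sub_μl_le {b : ℝ} (hb : ∀ q : S × A, |d q| ≤ b) (t : ℝ) (s : S) (a : A) : |d (s, a) - μl θ d t s| ≤ 2 * b := by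
  calc |d (s, a) - μl θ d t s| ≤ |d (s, a)| + |μl θ d t s| := abs_sub _ _
    _ ≤ b + b := add_le_add (hb (s, a)) (abs_μl_le θ d hb t s)
    _ = 2 * b := by ring

lemma νl_nonneg (t : ℝ) (s : S) : 0 ≤ νl θ d t s :=
  Finset.sum_nonneg fun a _ => mul_nonneg (pl_pos θ d t s a).le (sq_nonneg _)

lemma νl_le {b : ℝ} (hb : ∀ q : S × A, |d q| ≤ b) (t : ℝ) (s : S) : νl θ d t s ≤ b ^ 2 := by
  have hid : νl θ d t s = (∑ a : A, pl θ d t s a * d (s, a) ^ 2) - μl θ d t s ^ 2 := by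
    rw [νl]
    have key : ∀ a : A, pl θ d t s a * (d (s, a) - μl θ d t s) ^ 2 =
        pl θ d t s a * d (s, a) ^ 2 -
        (2 * μl θ d t s * (pl θ d t s a * d (s, a)) - μl θ d t s ^ 2 * pl θ d t s a) := by
      intro a; ring
    rw [Finset.sum_congr rfl fun a _ => key a, Finset.sum_sub_distrib,
      Finset.sum_sub_distrib, ← Finset.mul_sum, ← Finset.mul_sum, ← μl, pl_sum_one]
    ring
  have h2 : ∑ a : A, pl θ d t s a * d (s, a) ^ 2 ≤ b ^ 2 := by
    calc ∑ a : A, pl θ d t s a * d (s, a) ^ 2 ≤ ∑ a : A, pl θ d t s a * b ^ 2 := by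
          apply Finset.sum_le_sum
          intro a _
          apply mul_le_mul_of_nonneg_left _ (pl_pos θ d t s a).le
          calc d (s, a) ^ 2 = |d (s, a)| ^ 2 := (sq_abs _).symm
            _ ≤ b ^ 2 := pow_le_pow_left₀ (abs_nonneg _) (hb (s, a)) 2
      _ = b ^ 2 := by rw [← Finset.sum_mul, pl_sum_one, one_mul]
  nlinarith [sq_nonneg (μl θ d t s)]

lemma sum_pl_abs_le {b : ℝ} (hb : ∀ q : S × A, |d q| ≤ b) (t : ℝ) (s : S) :
    ∑ a : A, pl θ d t s a * |d (s, a) - μl θ d t s| ≤ 2 * b := by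
  calc ∑ a : A, pl θ d t s a * |d (s, a) - μl θ d t s|
      ≤ ∑ a : A, pl θ d t s a * (2 * b) := by
        apply Finset.sum_le_sum
        intro a _
        exact mul_le_mul_of_nonneg_left (abs_d_sub_μl_le θ d hb t s a) (pl_pos θ d t s a).le
    _ = 2 * b := by rw [← Finset.sum_mul, pl_sum_one, one_mul]

end Line

end FKL

namespace FKL

section Line2

variable {S A : Type*} [Fintype S] [Fintype A] [Nonempty S] [Nonempty A]
variable (θ d : EuclideanSpace ℝ (S × A))

lemma abs_log_pl_le {t : ℝ} (ht : t ∈ Set.Icc (0:ℝ) 1) (s : S) (a : A) :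
    |Real.log (pl θ d t s a)| ≤
      max |Real.log (pl θ d 0 s a)| |Real.log (pl θ d 1 s a)| := by
  set f : ℝ → ℝ := fun u => Real.log (pl θ d u s a) with hf
  have hfd : ∀ u, HasDerivAt f (d (s, a) - μl θ d u s) u := fun u =>
    hasDerivAt_log_pl θ d u s a
  have hμd : ∀ u, HasDerivAt (fun v => μl θ d v s) (νl θ d u s) u := fun u =>
    hasDerivAt_μl θ d u s
  have hμmono : Monotone (fun u => μl θ d u s) := by
    apply monotone_of_deriv_nonneg
    · exact fun u => (hμd u).differentiableAt
    · intro u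
      rw [(hμd u).deriv]
      exact νl_nonneg θ d u s
  have hmin : min (f 0) (f 1) ≤ f t := by
    by_cases hc : 0 ≤ d (s, a) - μl θ d t s
    · have hmono : MonotoneOn f (Set.Icc 0 t) := by
        apply monotoneOn_of_deriv_nonneg (convex_Icc 0 t)
        · exact fun u _ => ((hfd u).differentiableAt.continuousAt).continuousWithinAt
        · exact fun u _ => (hfd u).differentiableAt.differentiableWithinAt
        · intro u hu
          rw [(hfd u).deriv]
          rw [interior_Icc] at hu
          have : μl θ d u s ≤ μl θ d t s := hμmono hu.2.le
          linarith
      have := hmono (Set.left_mem_Icc.2 ht.1) (Set.right_mem_Icc.2 ht.1) ht.1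
      exact le_trans (min_le_left _ _) this
    · have hanti : AntitoneOn f (Set.Icc t 1) := by
        apply antitoneOn_of_deriv_nonpos (convex_Icc t 1)
        · exact fun u _ => ((hfd u).differentiableAt.continuousAt).continuousWithinAt
        · exact fun u _ => (hfd u).differentiableAt.differentiableWithinAt
        · intro u hu
          rw [(hfd u).deriv]
          rw [interior_Icc] at hu
          have : μl θ d t s ≤ μl θ d u s := hμmono hu.1.le
          linarith
      have := hanti (Set.left_mem_Icc.2 ht.2) (Set.right_mem_Icc.2 ht.2) ht.2
      exact le_trans (min_le_right _ _) this
  have hneg : ∀ u, f u ≤ 0 := fun u =>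
    Real.log_nonpos (pl_pos θ d u s a).le (pl_le_one θ d u s a)
  rw [abs_of_nonpos (hneg t), abs_of_nonpos (hneg 0), abs_of_nonpos (hneg 1)]
  have := neg_le_neg hmin
  calc -f t ≤ -(f 0 ⊓ f 1) := this
    _ = -f 0 ⊔ -f 1 := by
        rcases le_total (f 0) (f 1) with h | h
        · rw [min_eq_left h, max_eq_left (neg_le_neg h)]
        · rw [min_eq_right h, max_eq_right (neg_le_neg h)]

end Line2

end FKL

namespace FKL

section Value

variable {S A : Type*} [Fintype S] [Fintype A] [Nonempty S] [Nonempty A] [DecidableEq S]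
variable (P : S → A → S → ℝ) (r : S → A → ℝ) (γ lam : ℝ) (πref : S → A → ℝ)
variable (θ d : EuclideanSpace ℝ (S × A))

noncomputable def Vl (t : ℝ) (s : S) : ℝ := regV P r γ lam πref (θ + t • d) s

noncomputable def V1 (t : ℝ) (s : S) : ℝ := deriv (fun u => Vl P r γ lam πref θ d u s) t

noncomputable def V2 (t : ℝ) (s : S) : ℝ := deriv (fun u => V1 P r γ lam πref θ d u s) t

noncomputable def ql (t : ℝ) (s : S) (a : A) : ℝ :=
  r s a + γ * ∑ s' : S, P s a s' * Vl P r γ lam πref θ d t s'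

variable {γ}

lemma contDiff_Vl (hγ0 : 0 ≤ γ) (hγ1 : γ < 1)
    (hP : ∀ s a, (∀ s', 0 ≤ P s a s') ∧ ∑ s' : S, P s a s' = 1)
    (hπref : IsPolicy πref) (s : S) :
    ContDiff ℝ ((⊤ : ℕ∞) : WithTop ℕ∞) (fun t : ℝ => Vl P r γ lam πref θ d t s) := by
  have hline : ContDiff ℝ ((⊤ : ℕ∞) : WithTop ℕ∞) (fun t : ℝ => θ + t • d) :=
    contDiff_const.add (contDiff_id.smul contDiff_const)
  exact (contDiff_regV γ hγ0 hγ1 P hP r lam πref hπref s).comp hline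

variable (hγ0 : 0 ≤ γ) (hγ1 : γ < 1)
    (hP : ∀ s a, (∀ s', 0 ≤ P s a s') ∧ ∑ s' : S, P s a s' = 1)
    (hπref : IsPolicy πref)

include hγ0 hγ1 hP hπref

lemma hasDerivAt_Vl (t : ℝ) (s : S) :
    HasDerivAt (fun u => Vl P r γ lam πref θ d u s) (V1 P r γ lam πref θ d t s) t :=
  (((contDiff_Vl P r lam πref θ d hγ0 hγ1 hP hπref s).differentiable (by norm_num)) t).hasDerivAt

lemma contDiff_V1 (s : S) : ContDiff ℝ ((⊤ : ℕ∞) : WithTop ℕ∞) (fun t : ℝ => V1 P r γ lam πref θ d t s) :=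
  (contDiff_infty_iff_deriv.mp (contDiff_Vl P r lam πref θ d hγ0 hγ1 hP hπref s)).2

lemma hasDerivAt_V1 (t : ℝ) (s : S) :
    HasDerivAt (fun u => V1 P r γ lam πref θ d u s) (V2 P r γ lam πref θ d t s) t :=
  (((contDiff_V1 P r lam πref θ d hγ0 hγ1 hP hπref s).differentiable (by norm_num)) t).hasDerivAt

lemma hasDerivAt_ql (t : ℝ) (s : S) (a : A) :
    HasDerivAt (fun u => ql P r γ lam πref θ d u s a)
      (γ * ∑ s' : S, P s a s' * V1 P r γ lam πref θ d t s') t := by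
  apply HasDerivAt.const_add
  apply HasDerivAt.const_mul
  exact HasDerivAt.fun_sum fun s' _ =>
    (hasDerivAt_Vl P r lam πref θ d hγ0 hγ1 hP hπref t s').const_mul (P s a s')

lemma bellman_Vl (t : ℝ) (s : S) :
    Vl P r γ lam πref θ d t s =
      ∑ a : A, pl θ d t s a * ql P r γ lam πref θ d t s a -
      lam * ∑ a : A, πref s a * (Real.log (πref s a) - Real.log (pl θ d t s a)) := by
  have h := isRegValue_regV γ hγ0 hγ1 P hP r lam πref (θ + t • d) s
  rw [fDiv_log_eq (fun a => softmax_pos _ s a) (fun a => hπref.1 s a)] at h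
  exact h

lemma V1_eq (t : ℝ) (s : S) :
    V1 P r γ lam πref θ d t s =
      (∑ a : A, pl θ d t s a * (d (s, a) - μl θ d t s) * ql P r γ lam πref θ d t s a +
        lam * ∑ a : A, πref s a * (d (s, a) - μl θ d t s)) +
      γ * ∑ a : A, pl θ d t s a * ∑ s' : S, P s a s' * V1 P r γ lam πref θ d t s' := by
  have hR : HasDerivAt (fun u => ∑ a : A, pl θ d u s a * ql P r γ lam πref θ d u s a -
      lam * ∑ a : A, πref s a * (Real.log (πref s a) - Real.log (pl θ d u s a)))
      ((∑ a : A, (pl θ d t s a * (d (s, a) - μl θ d t s) * ql P r γ lam πref θ d t s a +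
        pl θ d t s a * (γ * ∑ s' : S, P s a s' * V1 P r γ lam πref θ d t s'))) -
       lam * ∑ a : A, πref s a * (-(d (s, a) - μl θ d t s))) t := by
    apply HasDerivAt.sub
    · apply HasDerivAt.fun_sum
      intro a _
      have := (hasDerivAt_pl θ d t s a).fun_mul
        (hasDerivAt_ql P r lam πref θ d hγ0 hγ1 hP hπref t s a)
      convert this using 1
    · apply HasDerivAt.const_mul
      apply HasDerivAt.fun_sum
      intro a _
      exact ((hasDerivAt_log_pl θ d t s a).const_sub (Real.log (πref s a))).const_mul
        (πref s a)
  have hL := hasDerivAt_Vl P r lam πref θ d hγ0 hγ1 hP hπref t s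
  have hfun : (fun u => Vl P r γ lam πref θ d u s) =
      (fun u => ∑ a : A, pl θ d u s a * ql P r γ lam πref θ d u s a -
      lam * ∑ a : A, πref s a * (Real.log (πref s a) - Real.log (pl θ d u s a))) := by
    funext u
    exact bellman_Vl P r lam πref θ d hγ0 hγ1 hP hπref u s
  rw [hfun] at hL
  have heq := hL.unique hR
  rw [heq, Finset.sum_add_distrib]
  have h1 : ∑ a : A, pl θ d t s a * (γ * ∑ s' : S, P s a s' * V1 P r γ lam πref θ d t s') =
      γ * ∑ a : A, pl θ d t s a * ∑ s' : S, P s a s' * V1 P r γ lam πref θ d t s' := by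
    rw [Finset.mul_sum]
    exact Finset.sum_congr rfl fun a _ => by ring
  have h2 : ∑ a : A, πref s a * (-(d (s, a) - μl θ d t s)) =
      -∑ a : A, πref s a * (d (s, a) - μl θ d t s) := by
    rw [← Finset.sum_neg_distrib]
    exact Finset.sum_congr rfl fun a _ => by ring
  rw [h1, h2]
  ring

end Value

end FKL

namespace FKL

section Value2

variable {S A : Type*} [Fintype S] [Fintype A] [Nonempty S] [Nonempty A] [DecidableEq S]
variable (P : S → A → S → ℝ) (r : S → A → ℝ) {γ : ℝ} (lam : ℝ) (πref : S → A → ℝ)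
variable (θ d : EuclideanSpace ℝ (S × A))
variable (hγ0 : 0 ≤ γ) (hγ1 : γ < 1)
    (hP : ∀ s a, (∀ s', 0 ≤ P s a s') ∧ ∑ s' : S, P s a s' = 1)
    (hπref : IsPolicy πref)

include hγ0 hγ1 hP hπref

lemma V2_eq (t : ℝ) (s : S) :
    V2 P r γ lam πref θ d t s =
      (∑ a : A, pl θ d t s a * ((d (s, a) - μl θ d t s) ^ 2 - νl θ d t s) *
          ql P r γ lam πref θ d t s a +
        2 * γ * ∑ a : A, pl θ d t s a * (d (s, a) - μl θ d t s) *
          ∑ s' : S, P s a s' * V1 P r γ lam πref θ d t s' -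
        lam * νl θ d t s) +
      γ * ∑ a : A, pl θ d t s a * ∑ s' : S, P s a s' * V2 P r γ lam πref θ d t s' := by
  have hdμ : ∀ a : A, HasDerivAt (fun u => d (s, a) - μl θ d u s) (-νl θ d t s) t :=
    fun a => (hasDerivAt_μl θ d t s).const_sub (d (s, a))
  have hplμ : ∀ a : A, HasDerivAt (fun u => pl θ d u s a * (d (s, a) - μl θ d u s))
      (pl θ d t s a * (d (s, a) - μl θ d t s) * (d (s, a) - μl θ d t s) +
        pl θ d t s a * -νl θ d t s) t :=
    fun a => (hasDerivAt_pl θ d t s a).mul (hdμ a)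
  have hR : HasDerivAt (fun u =>
      (∑ a : A, pl θ d u s a * (d (s, a) - μl θ d u s) * ql P r γ lam πref θ d u s a +
        lam * ∑ a : A, πref s a * (d (s, a) - μl θ d u s)) +
      γ * ∑ a : A, pl θ d u s a * ∑ s' : S, P s a s' * V1 P r γ lam πref θ d u s')
      ((∑ a : A, ((pl θ d t s a * (d (s, a) - μl θ d t s) * (d (s, a) - μl θ d t s) +
          pl θ d t s a * -νl θ d t s) * ql P r γ lam πref θ d t s a +
          pl θ d t s a * (d (s, a) - μl θ d t s) *
            (γ * ∑ s' : S, P s a s' * V1 P r γ lam πref θ d t s')) +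
        lam * ∑ a : A, πref s a * -νl θ d t s) +
       γ * ∑ a : A, (pl θ d t s a * (d (s, a) - μl θ d t s) *
            (∑ s' : S, P s a s' * V1 P r γ lam πref θ d t s') +
          pl θ d t s a * ∑ s' : S, P s a s' * V2 P r γ lam πref θ d t s')) t := by
    apply HasDerivAt.add
    · apply HasDerivAt.add
      · exact HasDerivAt.fun_sum fun a _ =>
          (hplμ a).mul (hasDerivAt_ql P r lam πref θ d hγ0 hγ1 hP hπref t s a)
      · exact HasDerivAt.const_mul lam <| HasDerivAt.fun_sum fun a _ =>
          (hdμ a).const_mul (πref s a)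
    · exact HasDerivAt.const_mul γ <| HasDerivAt.fun_sum fun a _ =>
        (hasDerivAt_pl θ d t s a).mul (HasDerivAt.fun_sum fun s' _ =>
          (hasDerivAt_V1 P r lam πref θ d hγ0 hγ1 hP hπref t s').const_mul (P s a s'))
  have hL := hasDerivAt_V1 P r lam πref θ d hγ0 hγ1 hP hπref t s
  have hfun : (fun u => V1 P r γ lam πref θ d u s) = (fun u =>
      (∑ a : A, pl θ d u s a * (d (s, a) - μl θ d u s) * ql P r γ lam πref θ d u s a +
        lam * ∑ a : A, πref s a * (d (s, a) - μl θ d u s)) +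
      γ * ∑ a : A, pl θ d u s a * ∑ s' : S, P s a s' * V1 P r γ lam πref θ d u s') := by
    funext u
    exact V1_eq P r lam πref θ d hγ0 hγ1 hP hπref u s
  rw [hfun] at hL
  have heq := hL.unique hR
  rw [heq]
  have h1 : ∑ a : A, ((pl θ d t s a * (d (s, a) - μl θ d t s) * (d (s, a) - μl θ d t s) +
      pl θ d t s a * -νl θ d t s) * ql P r γ lam πref θ d t s a +
      pl θ d t s a * (d (s, a) - μl θ d t s) *
        (γ * ∑ s' : S, P s a s' * V1 P r γ lam πref θ d t s')) =
      ∑ a : A, pl θ d t s a * ((d (s, a) - μl θ d t s) ^ 2 - νl θ d t s) *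
        ql P r γ lam πref θ d t s a +
      γ * ∑ a : A, pl θ d t s a * (d (s, a) - μl θ d t s) *
        ∑ s' : S, P s a s' * V1 P r γ lam πref θ d t s' := by
    rw [Finset.mul_sum, ← Finset.sum_add_distrib]
    apply Finset.sum_congr rfl
    intro a _
    ring
  have h2 : ∑ a : A, πref s a * -νl θ d t s = -νl θ d t s := by
    rw [← Finset.sum_mul, hπref.2 s]
    ring
  have h3 : ∑ a : A, (pl θ d t s a * (d (s, a) - μl θ d t s) *
      (∑ s' : S, P s a s' * V1 P r γ lam πref θ d t s') +
      pl θ d t s a * ∑ s' : S, P s a s' * V2 P r γ lam πref θ d t s') =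
      ∑ a : A, pl θ d t s a * (d (s, a) - μl θ d t s) *
        (∑ s' : S, P s a s' * V1 P r γ lam πref θ d t s') +
      ∑ a : A, pl θ d t s a * ∑ s' : S, P s a s' * V2 P r γ lam πref θ d t s' :=
    Finset.sum_add_distrib
  rw [h1, h2, h3]
  ring

end Value2

end FKL

namespace FKL

section Bounds

variable {S A : Type*} [Fintype S] [Fintype A] [Nonempty S] [Nonempty A] [DecidableEq S]
variable (P : S → A → S → ℝ) (r : S → A → ℝ) {γ : ℝ} (lam : ℝ) (πref : S → A → ℝ)
variable (θ d : EuclideanSpace ℝ (S × A))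
variable (hγ0 : 0 ≤ γ) (hγ1 : γ < 1)
    (hP : ∀ s a, (∀ s', 0 ≤ P s a s') ∧ ∑ s' : S, P s a s' = 1)
    (hπref : IsPolicy πref)
    {rmax : ℝ} (hr : ∀ s a, 0 ≤ r s a ∧ r s a ≤ rmax)
    {lam' : ℝ} (hlam : 0 < lam)
    {m : ℝ}
    (hm : ∀ s a, |Real.log (pl θ d 0 s a)| ≤ m ∧ |Real.log (pl θ d 1 s a)| ≤ m)

include hγ0 hγ1 hP hπref hr hlam hm

lemma log_pl_le_m {t : ℝ} (ht : t ∈ Set.Icc (0:ℝ) 1) (s : S) (a : A) :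
    |Real.log (pl θ d t s a)| ≤ m :=
  (abs_log_pl_le θ d ht s a).trans (max_le (hm s a).1 (hm s a).2)

lemma KL_bounds {t : ℝ} (ht : t ∈ Set.Icc (0:ℝ) 1) (s : S) :
    0 ≤ ∑ a : A, πref s a * (Real.log (πref s a) - Real.log (pl θ d t s a)) ∧
    ∑ a : A, πref s a * (Real.log (πref s a) - Real.log (pl θ d t s a)) ≤ m := by
  constructor
  · have key : ∀ a : A, πref s a - pl θ d t s a ≤
        πref s a * (Real.log (πref s a) - Real.log (pl θ d t s a)) := by
      intro a
      have hπa := hπref.1 s a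
      have hpa := pl_pos θ d t s a
      have hlog : Real.log (pl θ d t s a / πref s a) ≤ pl θ d t s a / πref s a - 1 :=
        Real.log_le_sub_one_of_pos (div_pos hpa hπa)
      rw [Real.log_div hpa.ne' hπa.ne'] at hlog
      have h2 : πref s a * (Real.log (pl θ d t s a) - Real.log (πref s a)) ≤
          πref s a * (pl θ d t s a / πref s a - 1) :=
        mul_le_mul_of_nonneg_left hlog hπa.le
      have h3 : πref s a * (pl θ d t s a / πref s a) = pl θ d t s a := by
        field_simp
      nlinarith
    have := Finset.sum_le_sum fun a (_ : a ∈ univ) => key a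
    rw [Finset.sum_sub_distrib, hπref.2 s, pl_sum_one θ d t s] at this
    linarith
  · have key : ∀ a : A, πref s a * (Real.log (πref s a) - Real.log (pl θ d t s a)) ≤
        πref s a * m := by
      intro a
      apply mul_le_mul_of_nonneg_left _ (hπref.1 s a).le
      have h1 : Real.log (πref s a) ≤ 0 := by
        apply Real.log_nonpos (hπref.1 s a).le
        have := Finset.single_le_sum (fun a' (_ : a' ∈ univ) => (hπref.1 s a').le)
          (Finset.mem_univ a)
        rw [hπref.2 s] at this
        exact this
      have h2 : -Real.log (pl θ d t s a) ≤ |Real.log (pl θ d t s a)| := neg_le_abs _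
      have := log_pl_le_m P r lam πref θ d hγ0 hγ1 hP hπref hr hlam hm ht s a
      linarith
    have := Finset.sum_le_sum fun a (_ : a ∈ univ) => key a
    rw [← Finset.sum_mul, hπref.2 s, one_mul] at this
    exact this

lemma rmax_nonneg : 0 ≤ rmax := by
  obtain ⟨s⟩ := (inferInstance : Nonempty S)
  obtain ⟨a⟩ := (inferInstance : Nonempty A)
  exact (hr s a).1.trans (hr s a).2

lemma m_nonneg : 0 ≤ m := by
  obtain ⟨s⟩ := (inferInstance : Nonempty S)
  obtain ⟨a⟩ := (inferInstance : Nonempty A)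
  exact (abs_nonneg _).trans (hm s a).1

lemma Vl_bound {t : ℝ} (ht : t ∈ Set.Icc (0:ℝ) 1) (s : S) :
    |Vl P r γ lam πref θ d t s| ≤ (rmax + lam * m) / (1 - γ) := by
  apply max_principle γ hγ0 hγ1 P hP (fun s a => pl θ d t s a)
    (fun s a => (pl_pos θ d t s a).le) (fun s => pl_sum_one θ d t s)
    (fun s => Vl P r γ lam πref θ d t s)
    (fun s => ∑ a : A, pl θ d t s a * r s a -
      lam * ∑ a : A, πref s a * (Real.log (πref s a) - Real.log (pl θ d t s a)))
    _ (rmax + lam * m) _ s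
  · intro s1
    show Vl P r γ lam πref θ d t s1 = _
    have hb := bellman_Vl P r lam πref θ d hγ0 hγ1 hP hπref t s1
    rw [hb]
    have : ∑ a : A, pl θ d t s1 a * ql P r γ lam πref θ d t s1 a =
        γ * (∑ a : A, pl θ d t s1 a * ∑ s' : S, P s1 a s' * Vl P r γ lam πref θ d t s') +
        ∑ a : A, pl θ d t s1 a * r s1 a := by
      rw [Finset.mul_sum, ← Finset.sum_add_distrib]
      apply Finset.sum_congr rfl
      intro a _
      rw [ql]
      ring
    rw [this]
    ring
  · intro s1
    show |∑ a : A, pl θ d t s1 a * r s1 a - lam * ∑ a : A, πref s1 a *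
      (Real.log (πref s1 a) - Real.log (pl θ d t s1 a))| ≤ rmax + lam * m
    have h1 : 0 ≤ ∑ a : A, pl θ d t s1 a * r s1 a :=
      Finset.sum_nonneg fun a _ => mul_nonneg (pl_pos θ d t s1 a).le (hr s1 a).1
    have h2 : ∑ a : A, pl θ d t s1 a * r s1 a ≤ rmax := by
      calc ∑ a : A, pl θ d t s1 a * r s1 a ≤ ∑ a : A, pl θ d t s1 a * rmax :=
            Finset.sum_le_sum fun a _ =>
              mul_le_mul_of_nonneg_left (hr s1 a).2 (pl_pos θ d t s1 a).le
        _ = rmax := by rw [← Finset.sum_mul, pl_sum_one, one_mul]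
    have h3 := KL_bounds P r lam πref θ d hγ0 hγ1 hP hπref hr hlam hm ht s1
    have h4 : 0 ≤ lam * ∑ a : A, πref s1 a *
        (Real.log (πref s1 a) - Real.log (pl θ d t s1 a)) := mul_nonneg hlam.le h3.1
    have h5 : lam * ∑ a : A, πref s1 a *
        (Real.log (πref s1 a) - Real.log (pl θ d t s1 a)) ≤ lam * m :=
      mul_le_mul_of_nonneg_left h3.2 hlam.le
    rw [abs_le]
    constructor <;> nlinarith

end Bounds

end FKL

namespace FKL

section Bounds2

variable {S A : Type*} [Fintype S] [Fintype A] [Nonempty S] [Nonempty A] [DecidableEq S]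
variable (P : S → A → S → ℝ) (r : S → A → ℝ) {γ : ℝ} (lam : ℝ) (πref : S → A → ℝ)
variable (θ d : EuclideanSpace ℝ (S × A))
variable (hγ0 : 0 ≤ γ) (hγ1 : γ < 1)
    (hP : ∀ s a, (∀ s', 0 ≤ P s a s') ∧ ∑ s' : S, P s a s' = 1)
    (hπref : IsPolicy πref)
    {rmax : ℝ} (hr : ∀ s a, 0 ≤ r s a ∧ r s a ≤ rmax)
    (hlam : 0 < lam)
    {m : ℝ}
    (hm : ∀ s a, |Real.log (pl θ d 0 s a)| ≤ m ∧ |Real.log (pl θ d 1 s a)| ≤ m)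
    {b : ℝ} (hb : ∀ q : S × A, |d q| ≤ b)

include hγ0 hγ1 hP hπref hr hlam hm

lemma sum_PV_le {t : ℝ} (ht : t ∈ Set.Icc (0:ℝ) 1) (s : S) (a : A) :
    |∑ s' : S, P s a s' * Vl P r γ lam πref θ d t s'| ≤ (rmax + lam * m) / (1 - γ) := by
  have hC : 0 ≤ (rmax + lam * m) / (1 - γ) := by
    have h1 := rmax_nonneg P r lam πref θ d hγ0 hγ1 hP hπref hr hlam hm (rmax := rmax)
    have h2 := m_nonneg P r lam πref θ d hγ0 hγ1 hP hπref hr hlam hm (m := m)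
    have : (0:ℝ) < 1 - γ := by linarith
    positivity
  calc |∑ s' : S, P s a s' * Vl P r γ lam πref θ d t s'|
      ≤ ∑ s' : S, |P s a s' * Vl P r γ lam πref θ d t s'| := Finset.abs_sum_le_sum_abs _ _
    _ ≤ ∑ s' : S, P s a s' * ((rmax + lam * m) / (1 - γ)) := by
        apply Finset.sum_le_sum
        intro s' _
        rw [abs_mul, abs_of_nonneg ((hP s a).1 s')]
        exact mul_le_mul_of_nonneg_left
          (Vl_bound P r lam πref θ d hγ0 hγ1 hP hπref hr hlam hm ht s') ((hP s a).1 s')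
    _ = (rmax + lam * m) / (1 - γ) := by rw [← Finset.sum_mul, (hP s a).2, one_mul]

lemma ql_bound {t : ℝ} (ht : t ∈ Set.Icc (0:ℝ) 1) (s : S) (a : A) :
    |ql P r γ lam πref θ d t s a| ≤ rmax + γ * ((rmax + lam * m) / (1 - γ)) := by
  rw [ql]
  have h1 := sum_PV_le P r lam πref θ d hγ0 hγ1 hP hπref hr hlam hm ht s a
  have h2 := (hr s a).1
  have h3 := (hr s a).2
  have := abs_nonneg (∑ s' : S, P s a s' * Vl P r γ lam πref θ d t s')
  rw [abs_le] at h1 ⊢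
  constructor <;> nlinarith

include hb

lemma V1_bound {t : ℝ} (ht : t ∈ Set.Icc (0:ℝ) 1) (s : S) :
    |V1 P r γ lam πref θ d t s| ≤
      (2 * b * (rmax + γ * ((rmax + lam * m) / (1 - γ))) + lam * (2 * b)) / (1 - γ) := by
  set Q := rmax + γ * ((rmax + lam * m) / (1 - γ)) with hQ
  have hQ0 : 0 ≤ Q := by
    have := ql_bound P r lam πref θ d hγ0 hγ1 hP hπref hr hlam hm ht s Classical.ofNonempty
    exact (abs_nonneg _).trans this
  have hb0 : 0 ≤ b := (abs_nonneg (d (s, Classical.ofNonempty))).trans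
    (hb (s, Classical.ofNonempty))
  apply max_principle γ hγ0 hγ1 P hP (fun s a => pl θ d t s a)
    (fun s a => (pl_pos θ d t s a).le) (fun s => pl_sum_one θ d t s)
    (fun s => V1 P r γ lam πref θ d t s)
    (fun s => ∑ a : A, pl θ d t s a * (d (s, a) - μl θ d t s) * ql P r γ lam πref θ d t s a +
        lam * ∑ a : A, πref s a * (d (s, a) - μl θ d t s))
    _ _ _ s
  · intro s1
    show V1 P r γ lam πref θ d t s1 = _
    rw [V1_eq P r lam πref θ d hγ0 hγ1 hP hπref t s1]
    ring
  · intro s1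
    show |∑ a : A, pl θ d t s1 a * (d (s1, a) - μl θ d t s1) * ql P r γ lam πref θ d t s1 a +
        lam * ∑ a : A, πref s1 a * (d (s1, a) - μl θ d t s1)| ≤ _
    have h1 : |∑ a : A, pl θ d t s1 a * (d (s1, a) - μl θ d t s1) *
        ql P r γ lam πref θ d t s1 a| ≤ 2 * b * Q := by
      calc |∑ a : A, pl θ d t s1 a * (d (s1, a) - μl θ d t s1) *
            ql P r γ lam πref θ d t s1 a|
          ≤ ∑ a : A, |pl θ d t s1 a * (d (s1, a) - μl θ d t s1) *
            ql P r γ lam πref θ d t s1 a| := Finset.abs_sum_le_sum_abs _ _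
        _ ≤ ∑ a : A, pl θ d t s1 a * |d (s1, a) - μl θ d t s1| * Q := by
            apply Finset.sum_le_sum
            intro a _
            rw [abs_mul, abs_mul, abs_of_pos (pl_pos θ d t s1 a)]
            exact mul_le_mul_of_nonneg_left
              (ql_bound P r lam πref θ d hγ0 hγ1 hP hπref hr hlam hm ht s1 a)
              (mul_nonneg (pl_pos θ d t s1 a).le (abs_nonneg _))
        _ ≤ 2 * b * Q := by
            have h2 : ∑ a : A, pl θ d t s1 a * |d (s1, a) - μl θ d t s1| * Q =
                (∑ a : A, pl θ d t s1 a * |d (s1, a) - μl θ d t s1|) * Q :=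
              (Finset.sum_mul _ _ _).symm
            rw [h2]
            exact mul_le_mul_of_nonneg_right (sum_pl_abs_le θ d hb t s1) hQ0
    have h2 : |∑ a : A, πref s1 a * (d (s1, a) - μl θ d t s1)| ≤ 2 * b := by
      calc |∑ a : A, πref s1 a * (d (s1, a) - μl θ d t s1)|
          ≤ ∑ a : A, |πref s1 a * (d (s1, a) - μl θ d t s1)| := Finset.abs_sum_le_sum_abs _ _
        _ ≤ ∑ a : A, πref s1 a * (2 * b) := by
            apply Finset.sum_le_sum
            intro a _
            rw [abs_mul, abs_of_pos (hπref.1 s1 a)]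
            exact mul_le_mul_of_nonneg_left (abs_d_sub_μl_le θ d hb t s1 a)
              (hπref.1 s1 a).le
        _ = 2 * b := by rw [← Finset.sum_mul, hπref.2 s1, one_mul]
    calc |∑ a : A, pl θ d t s1 a * (d (s1, a) - μl θ d t s1) *
          ql P r γ lam πref θ d t s1 a +
          lam * ∑ a : A, πref s1 a * (d (s1, a) - μl θ d t s1)|
        ≤ |∑ a : A, pl θ d t s1 a * (d (s1, a) - μl θ d t s1) *
            ql P r γ lam πref θ d t s1 a| +
          lam * |∑ a : A, πref s1 a * (d (s1, a) - μl θ d t s1)| := by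
          refine (abs_add_le _ _).trans ?_
          rw [abs_mul, abs_of_pos hlam]
      _ ≤ 2 * b * Q + lam * (2 * b) :=
          add_le_add h1 (mul_le_mul_of_nonneg_left h2 hlam.le)

lemma V2_bound {t : ℝ} (ht : t ∈ Set.Icc (0:ℝ) 1) (s : S) :
    |V2 P r γ lam πref θ d t s| ≤
      (2 * b ^ 2 * (rmax + γ * ((rmax + lam * m) / (1 - γ))) +
        2 * γ * (2 * b) *
          ((2 * b * (rmax + γ * ((rmax + lam * m) / (1 - γ))) + lam * (2 * b)) / (1 - γ)) +
        lam * b ^ 2) / (1 - γ) := by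
  set Q := rmax + γ * ((rmax + lam * m) / (1 - γ)) with hQ
  set W := (2 * b * Q + lam * (2 * b)) / (1 - γ) with hW
  have hb0 : 0 ≤ b := (abs_nonneg (d (s, Classical.ofNonempty))).trans
    (hb (s, Classical.ofNonempty))
  have hQ0 : 0 ≤ Q := by
    have := ql_bound P r lam πref θ d hγ0 hγ1 hP hπref hr hlam hm ht s Classical.ofNonempty
    exact (abs_nonneg _).trans this
  have hW0 : 0 ≤ W := by
    have : (0:ℝ) < 1 - γ := by linarith
    positivity
  apply max_principle γ hγ0 hγ1 P hP (fun s a => pl θ d t s a)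
    (fun s a => (pl_pos θ d t s a).le) (fun s => pl_sum_one θ d t s)
    (fun s => V2 P r γ lam πref θ d t s)
    (fun s => ∑ a : A, pl θ d t s a * ((d (s, a) - μl θ d t s) ^ 2 - νl θ d t s) *
          ql P r γ lam πref θ d t s a +
        2 * γ * ∑ a : A, pl θ d t s a * (d (s, a) - μl θ d t s) *
          ∑ s' : S, P s a s' * V1 P r γ lam πref θ d t s' -
        lam * νl θ d t s)
    _ _ _ s
  · intro s1
    show V2 P r γ lam πref θ d t s1 = _
    rw [V2_eq P r lam πref θ d hγ0 hγ1 hP hπref t s1]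
    ring
  · intro s1
    show |∑ a : A, pl θ d t s1 a * ((d (s1, a) - μl θ d t s1) ^ 2 - νl θ d t s1) *
          ql P r γ lam πref θ d t s1 a +
        2 * γ * ∑ a : A, pl θ d t s1 a * (d (s1, a) - μl θ d t s1) *
          ∑ s' : S, P s1 a s' * V1 P r γ lam πref θ d t s' -
        lam * νl θ d t s1| ≤ _
    have hT1 : |∑ a : A, pl θ d t s1 a * ((d (s1, a) - μl θ d t s1) ^ 2 - νl θ d t s1) *
        ql P r γ lam πref θ d t s1 a| ≤ 2 * b ^ 2 * Q := by
      calc |∑ a : A, pl θ d t s1 a * ((d (s1, a) - μl θ d t s1) ^ 2 - νl θ d t s1) *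
            ql P r γ lam πref θ d t s1 a|
          ≤ ∑ a : A, |pl θ d t s1 a * ((d (s1, a) - μl θ d t s1) ^ 2 - νl θ d t s1) *
            ql P r γ lam πref θ d t s1 a| := Finset.abs_sum_le_sum_abs _ _
        _ ≤ ∑ a : A, pl θ d t s1 a * ((d (s1, a) - μl θ d t s1) ^ 2 + νl θ d t s1) * Q := by
            apply Finset.sum_le_sum
            intro a _
            rw [abs_mul, abs_mul, abs_of_pos (pl_pos θ d t s1 a)]
            have habs : |(d (s1, a) - μl θ d t s1) ^ 2 - νl θ d t s1| ≤
                (d (s1, a) - μl θ d t s1) ^ 2 + νl θ d t s1 := by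
              rw [abs_sub_comm]
              refine (abs_sub _ _).trans ?_
              rw [abs_of_nonneg (νl_nonneg θ d t s1), abs_of_nonneg (sq_nonneg _)]
              linarith
            have hq := ql_bound P r lam πref θ d hγ0 hγ1 hP hπref hr hlam hm ht s1 a
            have h0 : 0 ≤ pl θ d t s1 a := (pl_pos θ d t s1 a).le
            have h1 : 0 ≤ |(d (s1, a) - μl θ d t s1) ^ 2 - νl θ d t s1| := abs_nonneg _
            have h2 : 0 ≤ (d (s1, a) - μl θ d t s1) ^ 2 + νl θ d t s1 := by
              have := νl_nonneg θ d t s1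
              positivity
            have h3 : 0 ≤ |ql P r γ lam πref θ d t s1 a| := abs_nonneg _
            exact mul_le_mul (mul_le_mul_of_nonneg_left habs h0) hq h3 (mul_nonneg h0 h2)
        _ = (∑ a : A, pl θ d t s1 a * ((d (s1, a) - μl θ d t s1) ^ 2 + νl θ d t s1)) * Q :=
            (Finset.sum_mul _ _ _).symm
        _ ≤ 2 * b ^ 2 * Q := by
            apply mul_le_mul_of_nonneg_right _ hQ0
            have : ∑ a : A, pl θ d t s1 a * ((d (s1, a) - μl θ d t s1) ^ 2 + νl θ d t s1) =
                νl θ d t s1 + (∑ a : A, pl θ d t s1 a) * νl θ d t s1 := by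
              simp_rw [mul_add, Finset.sum_add_distrib, ← Finset.sum_mul]
              rfl
            rw [this, pl_sum_one, one_mul]
            have := νl_le θ d hb t s1
            linarith
    have hT2 : |∑ a : A, pl θ d t s1 a * (d (s1, a) - μl θ d t s1) *
        ∑ s' : S, P s1 a s' * V1 P r γ lam πref θ d t s'| ≤ 2 * b * W := by
      calc |∑ a : A, pl θ d t s1 a * (d (s1, a) - μl θ d t s1) *
            ∑ s' : S, P s1 a s' * V1 P r γ lam πref θ d t s'|
          ≤ ∑ a : A, |pl θ d t s1 a * (d (s1, a) - μl θ d t s1) *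
            ∑ s' : S, P s1 a s' * V1 P r γ lam πref θ d t s'| := Finset.abs_sum_le_sum_abs _ _
        _ ≤ ∑ a : A, pl θ d t s1 a * |d (s1, a) - μl θ d t s1| * W := by
            apply Finset.sum_le_sum
            intro a _
            rw [abs_mul, abs_mul, abs_of_pos (pl_pos θ d t s1 a)]
            apply mul_le_mul_of_nonneg_left _
              (mul_nonneg (pl_pos θ d t s1 a).le (abs_nonneg _))
            calc |∑ s' : S, P s1 a s' * V1 P r γ lam πref θ d t s'|
                ≤ ∑ s' : S, |P s1 a s' * V1 P r γ lam πref θ d t s'| :=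
                  Finset.abs_sum_le_sum_abs _ _
              _ ≤ ∑ s' : S, P s1 a s' * W := by
                  apply Finset.sum_le_sum
                  intro s' _
                  rw [abs_mul, abs_of_nonneg ((hP s1 a).1 s')]
                  exact mul_le_mul_of_nonneg_left
                    (V1_bound P r lam πref θ d hγ0 hγ1 hP hπref hr hlam hm hb ht s')
                    ((hP s1 a).1 s')
              _ = W := by rw [← Finset.sum_mul, (hP s1 a).2, one_mul]
        _ = (∑ a : A, pl θ d t s1 a * |d (s1, a) - μl θ d t s1|) * W :=
            (Finset.sum_mul _ _ _).symm
        _ ≤ 2 * b * W := mul_le_mul_of_nonneg_right (sum_pl_abs_le θ d hb t s1) hW0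
    have hT3 : lam * νl θ d t s1 ≤ lam * b ^ 2 :=
      mul_le_mul_of_nonneg_left (νl_le θ d hb t s1) hlam.le
    have hT3' : 0 ≤ lam * νl θ d t s1 := mul_nonneg hlam.le (νl_nonneg θ d t s1)
    have habs2 : |2 * γ * ∑ a : A, pl θ d t s1 a * (d (s1, a) - μl θ d t s1) *
        ∑ s' : S, P s1 a s' * V1 P r γ lam πref θ d t s'| ≤ 2 * γ * (2 * b) * W := by
      rw [abs_mul, abs_of_nonneg (by linarith : (0:ℝ) ≤ 2 * γ)]
      calc 2 * γ * |∑ a : A, pl θ d t s1 a * (d (s1, a) - μl θ d t s1) *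
            ∑ s' : S, P s1 a s' * V1 P r γ lam πref θ d t s'|
          ≤ 2 * γ * (2 * b * W) := by
            apply mul_le_mul_of_nonneg_left hT2 (by linarith)
        _ = 2 * γ * (2 * b) * W := by ring
    calc |∑ a : A, pl θ d t s1 a * ((d (s1, a) - μl θ d t s1) ^ 2 - νl θ d t s1) *
          ql P r γ lam πref θ d t s1 a +
        2 * γ * ∑ a : A, pl θ d t s1 a * (d (s1, a) - μl θ d t s1) *
          ∑ s' : S, P s1 a s' * V1 P r γ lam πref θ d t s' -
        lam * νl θ d t s1|
        ≤ |∑ a : A, pl θ d t s1 a * ((d (s1, a) - μl θ d t s1) ^ 2 - νl θ d t s1) *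
            ql P r γ lam πref θ d t s1 a| +
          |2 * γ * ∑ a : A, pl θ d t s1 a * (d (s1, a) - μl θ d t s1) *
            ∑ s' : S, P s1 a s' * V1 P r γ lam πref θ d t s'| +
          |lam * νl θ d t s1| := by
          refine (abs_sub _ _).trans ?_
          gcongr
          exact abs_add_le _ _
      _ ≤ 2 * b ^ 2 * Q + 2 * γ * (2 * b) * W + lam * b ^ 2 := by
          rw [abs_of_nonneg hT3']
          exact add_le_add (add_le_add hT1 habs2) hT3

end Bounds2

end FKL

namespace FKL

lemma taylor_bound (g g1 g2 : ℝ → ℝ) (hg : ∀ t, HasDerivAt g (g1 t) t)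
    (hg1 : ∀ t, HasDerivAt g1 (g2 t) t) (L : ℝ)
    (hL : ∀ t ∈ Set.Icc (0:ℝ) 1, |g2 t| ≤ L) :
    |g 1 - g 0 - g1 0| ≤ L / 2 := by
  have hlip : ∀ t ∈ Set.Icc (0:ℝ) 1, |g1 t - g1 0| ≤ L * t := by
    intro t ht
    have := Convex.norm_image_sub_le_of_norm_hasDerivWithin_le
      (fun x (hx : x ∈ Set.Icc (0:ℝ) 1) => (hg1 x).hasDerivWithinAt)
      (fun x hx => by rw [Real.norm_eq_abs]; exact hL x hx)
      (convex_Icc 0 1) (Set.left_mem_Icc.2 zero_le_one) ht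
    rw [Real.norm_eq_abs, sub_zero, Real.norm_eq_abs, abs_of_nonneg ht.1] at this
    exact this
  have hdiff : Differentiable ℝ g1 := fun t => (hg1 t).differentiableAt
  have hcont : Continuous fun t => g1 t - g1 0 :=
    (hdiff.continuous).sub continuous_const
  have hftc : ∫ t in (0:ℝ)..1, (g1 t - g1 0) =
      (fun t => g t - t * g1 0) 1 - (fun t => g t - t * g1 0) 0 := by
    apply intervalIntegral.integral_eq_sub_of_hasDerivAt
      (f := fun t => g t - t * g1 0) (f' := fun t => g1 t - g1 0)
    · intro t ht
      exact (hg t).sub (hasDerivAt_mul_const (g1 0))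
    · exact hcont.intervalIntegrable 0 1
  have hval : g 1 - g 0 - g1 0 = ∫ t in (0:ℝ)..1, (g1 t - g1 0) := by
    rw [hftc]; simp; ring
  rw [hval]
  have habs : |∫ t in (0:ℝ)..1, (g1 t - g1 0)| ≤ ∫ t in (0:ℝ)..1, |g1 t - g1 0| := by
    exact intervalIntegral.abs_integral_le_integral_abs zero_le_one
  have hmono : ∫ t in (0:ℝ)..1, |g1 t - g1 0| ≤ ∫ t in (0:ℝ)..1, L * t := by
    apply intervalIntegral.integral_mono_on zero_le_one
    · exact (hcont.abs).intervalIntegrable 0 1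
    · exact (continuous_const.mul continuous_id).intervalIntegrable 0 1
    · exact hlip
  have hcomp : ∫ t in (0:ℝ)..1, L * t = L / 2 := by
    rw [intervalIntegral.integral_const_mul, integral_id]
    ring
  calc |∫ t in (0:ℝ)..1, (g1 t - g1 0)| ≤ ∫ t in (0:ℝ)..1, |g1 t - g1 0| := habs
    _ ≤ ∫ t in (0:ℝ)..1, L * t := hmono
    _ = L / 2 := hcomp

lemma final_arith (γ rmax lam m b : ℝ) (hγ0 : 0 ≤ γ) (hγ1 : γ < 1) (hrm : 0 ≤ rmax)
    (hlam : 0 < lam) (hm1 : 1 ≤ m) (hb0 : 0 ≤ b) :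
    (2 * b ^ 2 * (rmax + γ * ((rmax + lam * m) / (1 - γ))) +
        2 * γ * (2 * b) *
          ((2 * b * (rmax + γ * ((rmax + lam * m) / (1 - γ))) + lam * (2 * b)) / (1 - γ)) +
        lam * b ^ 2) / (1 - γ) ≤ 8 * (rmax + lam * m) * b ^ 2 / (1 - γ) ^ 3 := by
  have hD : (0:ℝ) < 1 - γ := by linarith
  have hlm : lam ≤ lam * m := by nlinarith
  have hC0 : 0 ≤ rmax + lam * m := by nlinarith
  have hrC : rmax ≤ rmax + lam * m := by nlinarith
  have hlC : lam ≤ rmax + lam * m := by nlinarith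
  set C := rmax + lam * m with hC
  set T := 2 * b ^ 2 * rmax * (1 - γ) ^ 2 + 2 * γ * b ^ 2 * C * (1 - γ) +
    8 * γ * b ^ 2 * rmax * (1 - γ) + 8 * γ ^ 2 * b ^ 2 * C +
    8 * γ * b ^ 2 * lam * (1 - γ) + lam * b ^ 2 * (1 - γ) ^ 2 with hT
  rw [← mul_le_mul_iff_left₀ (pow_pos hD 3)]
  have hLHS : (2 * b ^ 2 * (rmax + γ * (C / (1 - γ))) +
        2 * γ * (2 * b) *
          ((2 * b * (rmax + γ * (C / (1 - γ))) + lam * (2 * b)) / (1 - γ)) +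
        lam * b ^ 2) / (1 - γ) * (1 - γ) ^ 3 = T := by
    rw [hT]
    field_simp
    ring
  have hRHS : 8 * C * b ^ 2 / (1 - γ) ^ 3 * (1 - γ) ^ 3 = 8 * C * b ^ 2 :=
    div_mul_cancel₀ _ (pow_ne_zero 3 hD.ne')
  rw [hLHS, hRHS]
  have hbr : 0 ≤ C * (6 + 2 * (1 - γ)) + 8 * γ * (C - rmax - lam) -
      (2 * rmax + lam) * (1 - γ) := by nlinarith [mul_nonneg hγ0 (by linarith : 0 ≤ C - rmax - lam)]
  nlinarith [mul_nonneg (mul_nonneg (sq_nonneg b) hD.le) hbr]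

lemma coord_le_norm {S A : Type*} [Fintype S] [Fintype A]
    (d : EuclideanSpace ℝ (S × A)) (q : S × A) : |d q| ≤ ‖d‖ := by
  have h := EuclideanSpace.norm_eq d
  have h1 : |d q| ^ 2 ≤ ∑ i : S × A, ‖d i‖ ^ 2 := by
    rw [← Real.norm_eq_abs]
    exact Finset.single_le_sum (fun i _ => sq_nonneg ‖d i‖) (Finset.mem_univ q)
  have h2 : ∑ i : S × A, ‖d i‖ ^ 2 = ‖d‖ ^ 2 := by
    rw [h, Real.sq_sqrt]
    exact Finset.sum_nonneg fun i _ => sq_nonneg _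
  rw [h2] at h1
  have := abs_nonneg (d q)
  have := norm_nonneg d
  nlinarith

end FKL

namespace FKL

lemma one_le_sup_abs_log {S A : Type*} [Fintype S] [Fintype A] [Nonempty S] [Nonempty A]
    (hA : 3 ≤ Fintype.card A) (θ : S × A → ℝ) :
    1 ≤ ⨆ q : S × A, |Real.log (softmaxPolicy θ q.1 q.2)| := by
  obtain ⟨s0⟩ := (inferInstance : Nonempty S)
  have hex : ∃ a : A, softmaxPolicy θ s0 a ≤ 1 / 3 := by
    by_contra hcon
    push_neg at hcon
    have hlt : ∑ a : A, (1/3 : ℝ) < ∑ a : A, softmaxPolicy θ s0 a :=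
      Finset.sum_lt_sum_of_nonempty univ_nonempty fun a _ => hcon a
    rw [softmax_sum_one, Finset.sum_const, Finset.card_univ, nsmul_eq_mul] at hlt
    have : (3:ℝ) ≤ (Fintype.card A : ℝ) := by exact_mod_cast hA
    nlinarith
  obtain ⟨a0, ha0⟩ := hex
  have hp0 : 0 < softmaxPolicy θ s0 a0 := softmax_pos θ s0 a0
  have hlog3 : (1:ℝ) < Real.log 3 := by
    rw [Real.lt_log_iff_exp_lt (by norm_num : (0:ℝ) < 3)]
    calc Real.exp 1 < 2.7182818286 := Real.exp_one_lt_d9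
      _ < 3 := by norm_num
  have hinv : (3:ℝ) ≤ (softmaxPolicy θ s0 a0)⁻¹ := by
    rw [le_inv_comm₀ (by norm_num) hp0]
    calc softmaxPolicy θ s0 a0 ≤ 1/3 := ha0
      _ = 3⁻¹ := by norm_num
  have h1 : Real.log 3 ≤ Real.log (softmaxPolicy θ s0 a0)⁻¹ :=
    Real.log_le_log (by norm_num) hinv
  rw [Real.log_inv] at h1
  have h2 : 1 ≤ |Real.log (softmaxPolicy θ s0 a0)| := by
    rw [abs_of_nonpos (Real.log_nonpos hp0.le (softmax_le_one θ s0 a0))]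
    linarith
  calc (1:ℝ) ≤ |Real.log (softmaxPolicy θ s0 a0)| := h2
    _ = (fun q : S × A => |Real.log (softmaxPolicy θ q.1 q.2)|) (s0, a0) := rfl
    _ ≤ ⨆ q : S × A, |Real.log (softmaxPolicy θ q.1 q.2)| :=
        le_ciSup (f := fun q : S × A => |Real.log (softmaxPolicy θ q.1 q.2)|)
          (Set.Finite.bddAbove (Set.finite_range _)) (s0, a0)

end FKL

/-- (Forward KL smoothness) Assume `|A| ≥ 3`. For any distribution `ρ`
on `S` and any `θ, θ'`, the forward-KL-regularized value function (generator
`f(x) = −log x`) satisfies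
`|Ṽ_λ^{π_{θ'}}(ρ) − Ṽ_λ^{π_θ}(ρ) − ⟨∇_θ Ṽ_λ^{π_θ}(ρ), θ' − θ⟩| ≤ (L_F(θ,θ')/2)‖θ' − θ‖₂²`
with `L_F(θ,θ') = 8(r_max + λ max{max_{s,a}|log π_θ(a|s)|, max_{s,a}|log π_{θ'}(a|s)|})/(1−γ)³`. -/
theorem forward_kl_smoothness
    {S A : Type*} [Fintype S] [Fintype A] [Nonempty S] [Nonempty A]
    (hA : 3 ≤ Fintype.card A)
    (P : S → A → S → ℝ) (hP : ∀ s a, (∀ s', 0 ≤ P s a s') ∧ ∑ s' : S, P s a s' = 1)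
    (r : S → A → ℝ) (rmax : ℝ) (hr : ∀ s a, 0 ≤ r s a ∧ r s a ≤ rmax)
    (γ : ℝ) (hγ0 : 0 ≤ γ) (hγ1 : γ < 1)
    (πref : S → A → ℝ) (hπref : IsPolicy πref)
    (lam : ℝ) (hlam : 0 < lam)
    (ρ : S → ℝ) (hρ : (∀ s, 0 ≤ ρ s) ∧ ∑ s : S, ρ s = 1)
    (V : EuclideanSpace ℝ (S × A) → S → ℝ)
    (hV : ∀ θ, IsRegValue P r γ lam (fun x => -Real.log x) πref (softmaxPolicy θ) (V (WithLp.toLp 2 θ)))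
    (θ θ' : EuclideanSpace ℝ (S × A)) :
    |(∑ s : S, ρ s * V θ' s) - (∑ s : S, ρ s * V θ s) -
        ⟪gradient (fun η : EuclideanSpace ℝ (S × A) => ∑ s : S, ρ s * V η s) θ,
          θ' - θ⟫| ≤
      (8 * (rmax + lam *
          max (⨆ q : S × A, |Real.log (softmaxPolicy θ q.1 q.2)|)
            (⨆ q : S × A, |Real.log (softmaxPolicy θ' q.1 q.2)|)) /
        (1 - γ) ^ 3) / 2 * ‖θ' - θ‖ ^ 2 := by
  classical
  obtain ⟨hρ0, hρ1⟩ := hρ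
  set d : EuclideanSpace ℝ (S × A) := θ' - θ with hd
  set m : ℝ := max (⨆ q : S × A, |Real.log (softmaxPolicy θ q.1 q.2)|)
      (⨆ q : S × A, |Real.log (softmaxPolicy θ' q.1 q.2)|) with hmdef
  have hθt0 : θ + (0:ℝ) • d = θ := by simp
  have hθt1 : θ + (1:ℝ) • d = θ' := by rw [one_smul, hd]; abel
  have hm : ∀ s a, |Real.log (FKL.pl θ d 0 s a)| ≤ m ∧
      |Real.log (FKL.pl θ d 1 s a)| ≤ m := by
    intro s a
    constructor
    · rw [FKL.pl, hθt0]
      calc |Real.log (softmaxPolicy θ s a)|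
          = (fun q : S × A => |Real.log (softmaxPolicy θ q.1 q.2)|) (s, a) := rfl
        _ ≤ ⨆ q : S × A, |Real.log (softmaxPolicy θ q.1 q.2)| :=
            le_ciSup (f := fun q : S × A => |Real.log (softmaxPolicy θ q.1 q.2)|)
              (Set.Finite.bddAbove (Set.finite_range _)) (s, a)
        _ ≤ m := le_max_left _ _
    · rw [FKL.pl, hθt1]
      calc |Real.log (softmaxPolicy θ' s a)|
          = (fun q : S × A => |Real.log (softmaxPolicy θ' q.1 q.2)|) (s, a) := rfl
        _ ≤ ⨆ q : S × A, |Real.log (softmaxPolicy θ' q.1 q.2)| :=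
            le_ciSup (f := fun q : S × A => |Real.log (softmaxPolicy θ' q.1 q.2)|)
              (Set.Finite.bddAbove (Set.finite_range _)) (s, a)
        _ ≤ m := le_max_right _ _
  have hm1 : 1 ≤ m := le_trans (FKL.one_le_sup_abs_log hA θ) (le_max_left _ _)
  have hb : ∀ q : S × A, |d q| ≤ ‖d‖ := fun q => FKL.coord_le_norm d q
  have hb0 : 0 ≤ ‖d‖ := norm_nonneg d
  have hrm : 0 ≤ rmax := by
    obtain ⟨s⟩ := (inferInstance : Nonempty S)
    obtain ⟨a⟩ := (inferInstance : Nonempty A)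
    exact (hr s a).1.trans (hr s a).2
  have hVeq : ∀ η : EuclideanSpace ℝ (S × A), V η = FKL.regV P r γ lam πref η := by
    intro η
    exact FKL.isRegValue_unique γ hγ0 hγ1 P hP r lam (fun x => -Real.log x) πref
      (softmaxPolicy η) (fun s a => (FKL.softmax_pos η s a).le)
      (fun s => FKL.softmax_sum_one η s) (V η) (FKL.regV P r γ lam πref η) (hV η)
      (FKL.isRegValue_regV γ hγ0 hγ1 P hP r lam πref η)
  set g : ℝ → ℝ := fun t => ∑ s : S, ρ s * FKL.Vl P r γ lam πref θ d t s with hgdef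
  set g1 : ℝ → ℝ := fun t => ∑ s : S, ρ s * FKL.V1 P r γ lam πref θ d t s with hg1def
  set g2 : ℝ → ℝ := fun t => ∑ s : S, ρ s * FKL.V2 P r γ lam πref θ d t s with hg2def
  have hg : ∀ t, HasDerivAt g (g1 t) t := fun t => HasDerivAt.fun_sum fun s _ =>
    (FKL.hasDerivAt_Vl P r lam πref θ d hγ0 hγ1 hP hπref t s).const_mul (ρ s)
  have hg1 : ∀ t, HasDerivAt g1 (g2 t) t := fun t => HasDerivAt.fun_sum fun s _ =>
    (FKL.hasDerivAt_V1 P r lam πref θ d hγ0 hγ1 hP hπref t s).const_mul (ρ s)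
  have hL : ∀ t ∈ Set.Icc (0:ℝ) 1, |g2 t| ≤
      8 * (rmax + lam * m) * ‖d‖ ^ 2 / (1 - γ) ^ 3 := by
    intro t ht
    have hbd : ∀ s : S, |FKL.V2 P r γ lam πref θ d t s| ≤
        (2 * ‖d‖ ^ 2 * (rmax + γ * ((rmax + lam * m) / (1 - γ))) +
          2 * γ * (2 * ‖d‖) *
            ((2 * ‖d‖ * (rmax + γ * ((rmax + lam * m) / (1 - γ))) + lam * (2 * ‖d‖)) /
              (1 - γ)) + lam * ‖d‖ ^ 2) / (1 - γ) :=
      fun s => FKL.V2_bound P r lam πref θ d hγ0 hγ1 hP hπref hr hlam hm hb ht s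
    have hfin := FKL.final_arith γ rmax lam m ‖d‖ hγ0 hγ1 hrm hlam hm1 hb0
    calc |g2 t| ≤ ∑ s : S, |ρ s * FKL.V2 P r γ lam πref θ d t s| :=
          Finset.abs_sum_le_sum_abs _ _
      _ ≤ ∑ s : S, ρ s * ((2 * ‖d‖ ^ 2 * (rmax + γ * ((rmax + lam * m) / (1 - γ))) +
          2 * γ * (2 * ‖d‖) *
            ((2 * ‖d‖ * (rmax + γ * ((rmax + lam * m) / (1 - γ))) + lam * (2 * ‖d‖)) /
              (1 - γ)) + lam * ‖d‖ ^ 2) / (1 - γ)) := by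
          apply Finset.sum_le_sum
          intro s _
          rw [abs_mul, abs_of_nonneg (hρ0 s)]
          exact mul_le_mul_of_nonneg_left (hbd s) (hρ0 s)
      _ = (2 * ‖d‖ ^ 2 * (rmax + γ * ((rmax + lam * m) / (1 - γ))) +
          2 * γ * (2 * ‖d‖) *
            ((2 * ‖d‖ * (rmax + γ * ((rmax + lam * m) / (1 - γ))) + lam * (2 * ‖d‖)) /
              (1 - γ)) + lam * ‖d‖ ^ 2) / (1 - γ) := by
          rw [← Finset.sum_mul, hρ1, one_mul]
      _ ≤ 8 * (rmax + lam * m) * ‖d‖ ^ 2 / (1 - γ) ^ 3 := by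
          have h8 : 8 * (rmax + lam * m) * ‖d‖ ^ 2 / (1 - γ) ^ 3 =
              8 * (rmax + lam * m) / (1 - γ) ^ 3 * ‖d‖ ^ 2 := by ring
          linarith [hfin]
  have hT := FKL.taylor_bound g g1 g2 hg hg1 _ hL
  -- endpoints
  have hVl1 : g 1 = ∑ s : S, ρ s * V θ' s := by
    apply Finset.sum_congr rfl
    intro s _
    rw [FKL.Vl, ← WithLp.ofLp_smul, ← WithLp.ofLp_add, hθt1, hVeq θ']
  have hVl0 : g 0 = ∑ s : S, ρ s * V θ s := by
    apply Finset.sum_congr rfl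
    intro s _
    rw [FKL.Vl, ← WithLp.ofLp_smul, ← WithLp.ofLp_add, hθt0, hVeq θ]
  -- gradient identification
  have hgradfun : (fun η : EuclideanSpace ℝ (S × A) => ∑ s : S, ρ s * V η s) =
      (fun η : EuclideanSpace ℝ (S × A) => ∑ s : S, ρ s * FKL.regV P r γ lam πref η s) :=
    funext fun η => Finset.sum_congr rfl fun s _ => by rw [hVeq η]
  set F : EuclideanSpace ℝ (S × A) → ℝ :=
    fun η => ∑ s : S, ρ s * FKL.regV P r γ lam πref η s with hFdef
  have hFdiff : DifferentiableAt ℝ F θ :=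
    ((ContDiff.sum fun s _ => contDiff_const.mul
      (FKL.contDiff_regV γ hγ0 hγ1 P hP r lam πref hπref s)).differentiable
      (by norm_num)) θ
  have hline : HasDerivAt (fun t : ℝ => θ + t • d) d 0 := by
    have h1 : HasDerivAt (fun t : ℝ => t • d) ((1:ℝ) • d) 0 := (hasDerivAt_id' 0).smul_const d
    rw [one_smul] at h1
    exact h1.const_add θ
  have hF0 : HasFDerivAt F (fderiv ℝ F θ) (θ + (0:ℝ) • d) := by
    rw [hθt0]
    exact hFdiff.hasFDerivAt
  have hchain : HasDerivAt (fun t : ℝ => F (θ + t • d)) ((fderiv ℝ F θ) d) 0 :=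
    by have := hF0.comp_hasDerivAt 0 hline; exact this
  have hg10 : g1 0 = (fderiv ℝ F θ) d := (hg 0).unique hchain
  have hinner : ⟪gradient F θ, d⟫ = (fderiv ℝ F θ) d := by
    simp only [gradient]
    exact InnerProductSpace.toDual_symm_apply
  rw [hgradfun, hinner]
  rw [← hVl1, ← hVl0, ← hg10]
  exact hT.trans (le_of_eq (by ring))
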